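/- Commutativity of disjoint insertions: let d ≥ 1, let k_0, k_1 be nonnegative integers, let n, m, m′ > d with k_0 + d + k_1 + d ≤ n, and let I, I′, I″ be consistent sets of (d+1)-element subsets of [n], [m], [m′] respectively. Then (I ∘_{k_0} I′) ∘_{k_0+m+k_1} I″ = (I ∘_{k_0+d+k_1} I″) ∘_{k_0} I′, as sets of (d+1)-element subsets of [n+m+m′−2d]. -/

import Mathlib

/-- `hat s t` is `𝐬̂_t`: the finset `s` with its `t`-th smallest element removed (`t` is
1-indexed); for `s = {i_1 < ⋯ < i_c}`, `hat s t = s \ {i_t}`. -/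
def hat (s : Finset ℕ) (t : ℕ) : Finset ℕ :=
  s.erase ((s.sort (· ≤ ·)).getD (t - 1) 0)

/-- Ziegler's consistency condition for a set `I` of `(d+1)`-element subsets of `[N]`:
for every `(d+2)`-element subset `s ⊆ [N]`, the intersection `I ∩ P(s)` with the packet
`P(s) = (ŝ_{d+2}, …, ŝ_1)` is a beginning interval `{ŝ_{d+2}, …, ŝ_k}` or an ending
interval `{ŝ_k, …, ŝ_1}` of `P(s)`. -/
def IsConsistent (N d : ℕ) (I : Set (Finset ℕ)) : Prop :=
  ∀ s : Finset ℕ, s ⊆ Finset.Icc 1 N → s.card = d + 2 →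
    ∃ k ≤ d + 2,
      (∀ t, 1 ≤ t → t ≤ d + 2 → (hat s t ∈ I ↔ t ≤ k)) ∨
      (∀ t, 1 ≤ t → t ≤ d + 2 → (hat s t ∈ I ↔ k ≤ t))

/-- `I` is a family of `(d+1)`-element subsets of `[N]`. -/
def IsGrassFamily (N d : ℕ) (I : Set (Finset ℕ)) : Prop :=
  ∀ s ∈ I, s ⊆ Finset.Icc 1 N ∧ s.card = d + 1

/-- The `c` largest elements of a finset `s` of naturals. -/
def topPart (s : Finset ℕ) (c : ℕ) : Finset ℕ :=
  ((s.sort (· ≤ ·)).reverse.take c).toFinset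

/-- The insertion `I ∘_j I′` of a set `I′` of `(d+1)`-subsets of `[m]` into a set `I` of
`(d+1)`-subsets of `[n]` at position `j` (`0 ≤ j ≤ n − d`), a set of `(d+1)`-subsets of
`[n+m−d]`.  Here `[n+m−d] = A ∪ B ∪ C` with `A = {1,…,j}`, `B = {j+1,…,j+m}`,
`C = {j+m+1,…,n+m−d}`, `D = {j+1,…,j+d} ⊆ B`, and `ψ` is the inverse of the unique
increasing bijection `φ : [n] → A ∪ D ∪ C`.  A `(d+1)`-subset `L` of `[n+m−d]` lies in
`I ∘_j I′` iff: (i) `L ⊆ B` and `L − j ∈ I′`; or (ii) `L ⊆ A ∪ D ∪ C` and `φ⁻¹(L) ∈ I`;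
or (iii) neither, and `φ⁻¹(L̄) ∈ I` where `L̄ = L⁺ ∪ f(L⁻)`, `L⁺ = L ∩ (A ∪ D ∪ C)`,
`L⁻ = L ∩ (B ∖ D)`, and `f(L⁻)` consists of the `|L⁻|` largest elements of `D ∖ L⁺`. -/
def insSet (d n m j : ℕ) (I I' : Set (Finset ℕ)) : Set (Finset ℕ) :=
  let A : Finset ℕ := Finset.Icc 1 j
  let B : Finset ℕ := Finset.Icc (j + 1) (j + m)
  let D : Finset ℕ := Finset.Icc (j + 1) (j + d)
  let C : Finset ℕ := Finset.Icc (j + m + 1) (n + m - d)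
  let ψ : ℕ → ℕ := fun y => if y ≤ j + d then y else y - (m - d)
  {L | L ⊆ Finset.Icc 1 (n + m - d) ∧ L.card = d + 1 ∧
    ((L ⊆ B ∧ L.image (· - j) ∈ I') ∨
     (L ⊆ A ∪ D ∪ C ∧ L.image ψ ∈ I) ∨
     (¬ L ⊆ B ∧ ¬ L ⊆ A ∪ D ∪ C ∧
       ((L ∩ (A ∪ D ∪ C)) ∪
          topPart (D \ (L ∩ (A ∪ D ∪ C))) (L ∩ (B \ D)).card).image ψ ∈ I))}

-- helper lemmas
lemma topPart_zero (s : Finset ℕ) : topPart s 0 = ∅ := by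
  simp [topPart]

lemma topPart_subset (s : Finset ℕ) (c : ℕ) : topPart s c ⊆ s := by
  intro x hx
  rw [topPart, List.mem_toFinset] at hx
  have := (List.take_subset _ _) hx
  rw [List.mem_reverse] at this
  exact (Finset.mem_sort _).1 this

lemma topPart_card (s : Finset ℕ) (c : ℕ) (h : c ≤ s.card) :
    (topPart s c).card = c := by
  rw [topPart, List.card_toFinset, List.Nodup.dedup]
  · rw [List.length_take, List.length_reverse, Finset.length_sort]
    omega
  · exact (List.nodup_reverse.2 (s.sort_nodup (· ≤ ·))).sublist (List.take_sublist _ _)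

lemma sort_image_sub (s : Finset ℕ) (a : ℕ) (h : ∀ x ∈ s, a ≤ x) :
    ((s.image (· - a)).sort (· ≤ ·)) = (s.sort (· ≤ ·)).map (· - a) := by
  have hinj : Set.InjOn (· - a) s := by
    intro x hx y hy hxy
    have := h x hx; have := h y hy
    simp only at hxy; omega
  refine (fun h1 h2 h3 => List.Perm.eq_of_pairwise' (r := (· ≤ ·)) h2 h3 h1) ?_ ?_ ?_
  · rw [← Multiset.coe_eq_coe]
    rw [Finset.sort_eq]
    rw [← Multiset.map_coe, Finset.sort_eq]
    exact (Finset.image_val_of_injOn hinj)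
  · exact Finset.pairwise_sort _ _
  · rw [List.pairwise_map]
    apply (Finset.pairwise_sort s (· ≤ ·)).imp_of_mem
    intro x y _ _ hxy
    simpa using Nat.sub_le_sub_right hxy a

lemma topPart_image_sub (s : Finset ℕ) (a c : ℕ) (h : ∀ x ∈ s, a ≤ x) :
    topPart (s.image (· - a)) c = (topPart s c).image (· - a) := by
  rw [topPart, topPart, sort_image_sub s a h, ← List.map_reverse, ← List.map_take]
  ext y
  simp only [List.mem_toFinset, ← List.map_reverse, ← List.map_take, List.mem_map,
    Finset.mem_image]

lemma image_ite_of_le (s : Finset ℕ) (b a : ℕ) (h : ∀ x ∈ s, x ≤ b) :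
    s.image (fun y => if y ≤ b then y else y - a) = s := by
  have h2 : s.image (fun y => if y ≤ b then y else y - a) = s.image id :=
    Finset.image_congr (fun x hx => if_pos (h x (Finset.mem_coe.1 hx)))
  rw [h2, Finset.image_id]

lemma image_ite_of_gt (s : Finset ℕ) (b a : ℕ) (h : ∀ x ∈ s, ¬ x ≤ b) :
    s.image (fun y => if y ≤ b then y else y - a) = s.image (fun y => y - a) :=
  Finset.image_congr (fun x hx => if_neg (h x (Finset.mem_coe.1 hx)))

lemma mem_insSet {d n m j : ℕ} {I I' : Set (Finset ℕ)} {L : Finset ℕ} :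
    L ∈ insSet d n m j I I' ↔
      L ⊆ Finset.Icc 1 (n + m - d) ∧ L.card = d + 1 ∧
      ((L ⊆ Finset.Icc (j+1) (j+m) ∧ L.image (· - j) ∈ I') ∨
       (¬ L ⊆ Finset.Icc (j+1) (j+m) ∧
         ((L ∩ (Finset.Icc 1 j ∪ Finset.Icc (j+1) (j+d) ∪ Finset.Icc (j+m+1) (n+m-d))) ∪
            topPart (Finset.Icc (j+1) (j+d) \
                (L ∩ (Finset.Icc 1 j ∪ Finset.Icc (j+1) (j+d) ∪ Finset.Icc (j+m+1) (n+m-d))))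
              (L ∩ (Finset.Icc (j+1) (j+m) \ Finset.Icc (j+1) (j+d))).card).image
           (fun y => if y ≤ j + d then y else y - (m - d)) ∈ I)) := by
  rw [insSet]
  simp only [Set.mem_setOf_eq]
  refine and_congr_right fun hsub => and_congr_right fun hcard => ?_
  set A : Finset ℕ := Finset.Icc 1 j
  set B : Finset ℕ := Finset.Icc (j + 1) (j + m)
  set D : Finset ℕ := Finset.Icc (j + 1) (j + d)
  set C : Finset ℕ := Finset.Icc (j + m + 1) (n + m - d)
  have hBS : L ⊆ B → ¬ L ⊆ A ∪ D ∪ C := by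
    intro hB hS
    have hLD : L ⊆ D := by
      intro x hx
      have h1 := hB hx; have h2 := hS hx
      simp only [A, B, C, D, Finset.mem_union, Finset.mem_Icc] at h1 h2 ⊢
      omega
    have := Finset.card_le_card hLD
    rw [hcard, Nat.card_Icc] at this
    omega
  have hkey : L ⊆ A ∪ D ∪ C →
      (L ∩ (A ∪ D ∪ C)) ∪ topPart (D \ (L ∩ (A ∪ D ∪ C))) (L ∩ (B \ D)).card = L := by
    intro hS
    have h1 : L ∩ (A ∪ D ∪ C) = L := Finset.inter_eq_left.2 hS
    have h2 : L ∩ (B \ D) = ∅ := by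
      rw [Finset.eq_empty_iff_forall_notMem]
      intro x hx
      rw [Finset.mem_inter, Finset.mem_sdiff] at hx
      have h3 := hS hx.1
      simp only [A, B, C, D, Finset.mem_union, Finset.mem_Icc] at h3 hx
      omega
    rw [h1, h2, Finset.card_empty, topPart_zero, Finset.union_empty]
  constructor
  · rintro (⟨h, hI'⟩ | ⟨h, hI⟩ | ⟨h1, h2, hI⟩)
    · exact Or.inl ⟨h, hI'⟩
    · refine Or.inr ⟨fun hB => hBS hB h, ?_⟩
      rw [hkey h]; exact hI
    · exact Or.inr ⟨h1, hI⟩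
  · rintro (⟨h, hI'⟩ | ⟨h1, hI⟩)
    · exact Or.inl ⟨h, hI'⟩
    · by_cases hS : L ⊆ A ∪ D ∪ C
      · refine Or.inr (Or.inl ⟨hS, ?_⟩)
        rw [hkey hS] at hI; exact hI
      · exact Or.inr (Or.inr ⟨h1, hS, hI⟩)


set_option maxHeartbeats 2000000 in
/-- Commutativity of disjoint insertions:
`(I ∘_{k₀} I′) ∘_{k₀+m+k₁} I″ = (I ∘_{k₀+d+k₁} I″) ∘_{k₀} I′` as sets of `(d+1)`-element
subsets of `[n+m+m′−2d]`. -/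
theorem insertion_commutative
    (d k₀ k₁ n m m' : ℕ) (hd : 1 ≤ d) (hn : d < n) (hm : d < m) (hm' : d < m')
    (hk : k₀ + d + k₁ + d ≤ n)
    (I I' I'' : Set (Finset ℕ))
    (hIfam : IsGrassFamily n d I) (hIcons : IsConsistent n d I)
    (hI'fam : IsGrassFamily m d I') (hI'cons : IsConsistent m d I')
    (hI''fam : IsGrassFamily m' d I'') (hI''cons : IsConsistent m' d I'') :
    insSet d (n + m - d) m' (k₀ + m + k₁) (insSet d n m k₀ I I') I'' =
      insSet d (n + m' - d) m k₀ (insSet d n m' (k₀ + d + k₁) I I'') I' := by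
  ext L
  simp only [mem_insSet]
  rw [show n + m' - d + m - d = n + m - d + m' - d from by omega]
  refine and_congr_right fun hsub => and_congr_right fun hcard => ?_
  have hLb : ∀ x ∈ L, 1 ≤ x ∧ x ≤ n + m - d + m' - d := fun x hx =>
    Finset.mem_Icc.1 (hsub hx)
  by_cases hP : L ⊆ Finset.Icc (k₀ + m + k₁ + 1) (k₀ + m + k₁ + m')
  · -- Case P : L inside the I'' block
    obtain ⟨x₀, hx₀⟩ := Finset.card_pos.1 (show 0 < L.card by rw [hcard]; omega)
    have hx₀P := Finset.mem_Icc.1 (hP hx₀)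
    have hnQ : ¬ L ⊆ Finset.Icc (k₀ + 1) (k₀ + m) := fun hQ => by
      have := Finset.mem_Icc.1 (hQ hx₀); omega
    have hUr : L ∩ (Finset.Icc 1 k₀ ∪ Finset.Icc (k₀+1) (k₀+d) ∪
        Finset.Icc (k₀+m+1) (n+m-d+m'-d)) = L := by
      refine Finset.inter_eq_left.2 fun x hx => ?_
      have h1 := Finset.mem_Icc.1 (hP hx)
      have h2 := hLb x hx
      simp only [Finset.mem_union, Finset.mem_Icc]
      omega
    have hBm0 : L ∩ (Finset.Icc (k₀+1) (k₀+m) \ Finset.Icc (k₀+1) (k₀+d)) = ∅ := by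
      rw [Finset.eq_empty_iff_forall_notMem]
      intro x hx
      rw [Finset.mem_inter, Finset.mem_sdiff, Finset.mem_Icc, Finset.mem_Icc] at hx
      have := Finset.mem_Icc.1 (hP hx.1)
      omega
    have hKval : ((L ∩ (Finset.Icc 1 k₀ ∪ Finset.Icc (k₀+1) (k₀+d) ∪
          Finset.Icc (k₀+m+1) (n+m-d+m'-d))) ∪
        topPart (Finset.Icc (k₀+1) (k₀+d) \ (L ∩ (Finset.Icc 1 k₀ ∪ Finset.Icc (k₀+1) (k₀+d) ∪
          Finset.Icc (k₀+m+1) (n+m-d+m'-d))))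
          (L ∩ (Finset.Icc (k₀+1) (k₀+m) \ Finset.Icc (k₀+1) (k₀+d))).card).image
          (fun y => if y ≤ k₀ + d then y else y - (m - d)) = L.image (fun y => y - (m-d)) := by
      rw [hUr, hBm0, Finset.card_empty, topPart_zero, Finset.union_empty]
      exact image_ite_of_gt _ _ _ (fun x hx => by
        have := Finset.mem_Icc.1 (hP (Finset.mem_coe.1 hx)); omega)
    rw [hKval]
    have hcomp : (L.image (fun y => y - (m - d))).image (· - (k₀ + d + k₁)) =
        L.image (· - (k₀ + m + k₁)) := by
      rw [Finset.image_image]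
      refine Finset.image_congr fun x hx => ?_
      have := Finset.mem_Icc.1 (hP (Finset.mem_coe.1 hx))
      simp only [Function.comp]
      omega
    rw [hcomp]
    have hK'sub : L.image (fun y => y - (m - d)) ⊆ Finset.Icc 1 (n + m' - d) := by
      intro y hy
      obtain ⟨x, hx, rfl⟩ := Finset.mem_image.1 hy
      have h1 := Finset.mem_Icc.1 (hP hx); have h2 := hLb x hx
      rw [Finset.mem_Icc]; omega
    have hK'card : (L.image (fun y => y - (m - d))).card = d + 1 := by
      rw [Finset.card_image_of_injOn, hcard]
      intro x hx y hy hxy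
      simp only at hxy
      have := Finset.mem_Icc.1 (hP (Finset.mem_coe.1 hx))
      have := Finset.mem_Icc.1 (hP (Finset.mem_coe.1 hy))
      omega
    have hB'' : L.image (fun y => y - (m - d)) ⊆ Finset.Icc (k₀+d+k₁+1) (k₀+d+k₁+m') := by
      intro y hy
      obtain ⟨x, hx, rfl⟩ := Finset.mem_image.1 hy
      have := Finset.mem_Icc.1 (hP hx)
      rw [Finset.mem_Icc]; omega
    constructor
    · rintro (⟨-, h⟩ | ⟨hn', -⟩)
      · exact Or.inr ⟨hnQ, hK'sub, hK'card, Or.inl ⟨hB'', h⟩⟩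
      · exact absurd hP hn'
    · rintro (⟨hB₁, -⟩ | ⟨-, -, -, (⟨-, h⟩ | ⟨hn', -⟩)⟩)
      · exact absurd hB₁ hnQ
      · exact Or.inl ⟨hP, h⟩
      · exact absurd hB'' hn'
  · by_cases hQ : L ⊆ Finset.Icc (k₀ + 1) (k₀ + m)
    · -- Case Q : L inside the I' block
      obtain ⟨x₀, hx₀⟩ := Finset.card_pos.1 (show 0 < L.card by rw [hcard]; omega)
      have hx₀Q := Finset.mem_Icc.1 (hQ hx₀)
      have hU : L ∩ (Finset.Icc 1 (k₀+m+k₁) ∪ Finset.Icc (k₀+m+k₁+1) (k₀+m+k₁+d) ∪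
          Finset.Icc (k₀+m+k₁+m'+1) (n+m-d+m'-d)) = L := by
        refine Finset.inter_eq_left.2 fun x hx => ?_
        have h1 := Finset.mem_Icc.1 (hQ hx)
        have h2 := hLb x hx
        simp only [Finset.mem_union, Finset.mem_Icc]
        omega
      have hBm0 : L ∩ (Finset.Icc (k₀+m+k₁+1) (k₀+m+k₁+m') \
          Finset.Icc (k₀+m+k₁+1) (k₀+m+k₁+d)) = ∅ := by
        rw [Finset.eq_empty_iff_forall_notMem]
        intro x hx
        rw [Finset.mem_inter, Finset.mem_sdiff, Finset.mem_Icc, Finset.mem_Icc] at hx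
        have := Finset.mem_Icc.1 (hQ hx.1)
        omega
      have hKval : ((L ∩ (Finset.Icc 1 (k₀+m+k₁) ∪ Finset.Icc (k₀+m+k₁+1) (k₀+m+k₁+d) ∪
            Finset.Icc (k₀+m+k₁+m'+1) (n+m-d+m'-d))) ∪
          topPart (Finset.Icc (k₀+m+k₁+1) (k₀+m+k₁+d) \
              (L ∩ (Finset.Icc 1 (k₀+m+k₁) ∪ Finset.Icc (k₀+m+k₁+1) (k₀+m+k₁+d) ∪
            Finset.Icc (k₀+m+k₁+m'+1) (n+m-d+m'-d))))
            (L ∩ (Finset.Icc (k₀+m+k₁+1) (k₀+m+k₁+m') \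
              Finset.Icc (k₀+m+k₁+1) (k₀+m+k₁+d))).card).image
            (fun y => if y ≤ k₀+m+k₁+d then y else y - (m'-d)) = L := by
        rw [hU, hBm0, Finset.card_empty, topPart_zero, Finset.union_empty]
        exact image_ite_of_le _ _ _ (fun x hx => by
          have := Finset.mem_Icc.1 (hQ (Finset.mem_coe.1 hx)); omega)
      rw [hKval]
      have hKsub : L ⊆ Finset.Icc 1 (n + m - d) := fun x hx => by
        have h1 := Finset.mem_Icc.1 (hQ hx); have h2 := hLb x hx
        rw [Finset.mem_Icc]; omega
      constructor
      · rintro (⟨hB₂, -⟩ | ⟨-, -, -, (⟨-, h⟩ | ⟨hn', -⟩)⟩)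
        · exact absurd hB₂ hP
        · exact Or.inl ⟨hQ, h⟩
        · exact absurd hQ hn'
      · rintro (⟨-, h⟩ | ⟨hn', -⟩)
        · exact Or.inr ⟨hP, hKsub, hcard, Or.inl ⟨hQ, h⟩⟩
        · exact absurd hQ hn'
    · -- Case R : L meets neither block fully
      -- basic pieces of L
      set LoA := L ∩ Finset.Icc 1 (k₀+d) with hLoA
      set Bm := L ∩ (Finset.Icc (k₀+1) (k₀+m) \ Finset.Icc (k₀+1) (k₀+d)) with hBm
      set MidL := L ∩ Finset.Icc (k₀+m+1) (k₀+m+k₁+d) with hMidL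
      set Bm2 := L ∩ (Finset.Icc (k₀+m+k₁+1) (k₀+m+k₁+m') \
        Finset.Icc (k₀+m+k₁+1) (k₀+m+k₁+d)) with hBm2
      set Hi := L ∩ Finset.Icc (k₀+m+k₁+m'+1) (n+m-d+m'-d) with hHi
      -- elementwise bounds
      have hLoAb : ∀ x ∈ LoA, x ∈ L ∧ 1 ≤ x ∧ x ≤ k₀+d := fun x hx => by
        rw [hLoA, Finset.mem_inter, Finset.mem_Icc] at hx; exact ⟨hx.1, hx.2.1, hx.2.2⟩
      have hBmb : ∀ x ∈ Bm, x ∈ L ∧ k₀+d+1 ≤ x ∧ x ≤ k₀+m := fun x hx => by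
        rw [hBm, Finset.mem_inter, Finset.mem_sdiff, Finset.mem_Icc, Finset.mem_Icc] at hx
        exact ⟨hx.1, by omega, by omega⟩
      have hMidLb : ∀ x ∈ MidL, x ∈ L ∧ k₀+m+1 ≤ x ∧ x ≤ k₀+m+k₁+d := fun x hx => by
        rw [hMidL, Finset.mem_inter, Finset.mem_Icc] at hx; exact ⟨hx.1, hx.2.1, hx.2.2⟩
      have hBm2b : ∀ x ∈ Bm2, x ∈ L ∧ k₀+m+k₁+d+1 ≤ x ∧ x ≤ k₀+m+k₁+m' := fun x hx => by
        rw [hBm2, Finset.mem_inter, Finset.mem_sdiff, Finset.mem_Icc, Finset.mem_Icc] at hx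
        exact ⟨hx.1, by omega, by omega⟩
      have hHib : ∀ x ∈ Hi, x ∈ L ∧ k₀+m+k₁+m'+1 ≤ x ∧ x ≤ n+m-d+m'-d := fun x hx => by
        rw [hHi, Finset.mem_inter, Finset.mem_Icc] at hx; exact ⟨hx.1, hx.2.1, hx.2.2⟩
      have hF1b : ∀ x ∈ topPart (Finset.Icc (k₀+1) (k₀+d) \ L) Bm.card,
          x ∉ L ∧ k₀+1 ≤ x ∧ x ≤ k₀+d := fun x hx => by
        have := topPart_subset _ _ hx
        rw [Finset.mem_sdiff, Finset.mem_Icc] at this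
        exact ⟨this.2, this.1.1, this.1.2⟩
      have hF2b : ∀ x ∈ topPart (Finset.Icc (k₀+m+k₁+1) (k₀+m+k₁+d) \ L) Bm2.card,
          x ∉ L ∧ k₀+m+k₁+1 ≤ x ∧ x ≤ k₀+m+k₁+d := fun x hx => by
        have := topPart_subset _ _ hx
        rw [Finset.mem_sdiff, Finset.mem_Icc] at this
        exact ⟨this.2, this.1.1, this.1.2⟩
      -- witnesses from the two non-subset hypotheses
      obtain ⟨a, haL, haP⟩ := Finset.not_subset.1 hP
      obtain ⟨b, hbL, hbQ⟩ := Finset.not_subset.1 hQ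
      have haP' : ¬ (k₀+m+k₁+1 ≤ a ∧ a ≤ k₀+m+k₁+m') := fun h => haP (Finset.mem_Icc.2 h)
      have hbQ' : ¬ (k₀+1 ≤ b ∧ b ≤ k₀+m) := fun h => hbQ (Finset.mem_Icc.2 h)
      -- cardinality bounds for the fills
      have hc1 : Bm.card ≤ (Finset.Icc (k₀+1) (k₀+d) \ L).card := by
        have h1 : (L ∩ Finset.Icc (k₀+1) (k₀+m)).card < L.card :=
          Finset.card_lt_card ((Finset.ssubset_iff_of_subset Finset.inter_subset_left).2
            ⟨b, hbL, fun hmem => hbQ (Finset.mem_inter.1 hmem).2⟩)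
        have h2 : L ∩ Finset.Icc (k₀+1) (k₀+m) = (L ∩ Finset.Icc (k₀+1) (k₀+d)) ∪ Bm := by
          ext x
          simp only [hBm, Finset.mem_inter, Finset.mem_union, Finset.mem_sdiff, Finset.mem_Icc]
          by_cases hxL : x ∈ L <;> simp [hxL] <;> omega
        have h3 : Disjoint (L ∩ Finset.Icc (k₀+1) (k₀+d)) Bm :=
          Finset.disjoint_left.2 fun x h1 h2 => by
            rw [Finset.mem_inter, Finset.mem_Icc] at h1
            have := hBmb x h2; omega
        have h4 := Finset.card_inter_add_card_sdiff (Finset.Icc (k₀+1) (k₀+d)) L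
        have h5 : (Finset.Icc (k₀+1) (k₀+d)).card = d := by rw [Nat.card_Icc]; omega
        have h6 : (Finset.Icc (k₀+1) (k₀+d)) ∩ L = L ∩ (Finset.Icc (k₀+1) (k₀+d)) :=
          Finset.inter_comm _ _
        rw [h2, Finset.card_union_of_disjoint h3] at h1
        rw [h6] at h4
        omega
      have hc2 : Bm2.card ≤ (Finset.Icc (k₀+m+k₁+1) (k₀+m+k₁+d) \ L).card := by
        have h1 : (L ∩ Finset.Icc (k₀+m+k₁+1) (k₀+m+k₁+m')).card < L.card :=
          Finset.card_lt_card ((Finset.ssubset_iff_of_subset Finset.inter_subset_left).2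
            ⟨a, haL, fun hmem => haP (Finset.mem_inter.1 hmem).2⟩)
        have h2 : L ∩ Finset.Icc (k₀+m+k₁+1) (k₀+m+k₁+m') =
            (L ∩ Finset.Icc (k₀+m+k₁+1) (k₀+m+k₁+d)) ∪ Bm2 := by
          ext x
          simp only [hBm2, Finset.mem_inter, Finset.mem_union, Finset.mem_sdiff, Finset.mem_Icc]
          by_cases hxL : x ∈ L <;> simp [hxL] <;> omega
        have h3 : Disjoint (L ∩ Finset.Icc (k₀+m+k₁+1) (k₀+m+k₁+d)) Bm2 :=
          Finset.disjoint_left.2 fun x h1 h2 => by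
            rw [Finset.mem_inter, Finset.mem_Icc] at h1
            have := hBm2b x h2; omega
        have h4 := Finset.card_inter_add_card_sdiff (Finset.Icc (k₀+m+k₁+1) (k₀+m+k₁+d)) L
        have h5 : (Finset.Icc (k₀+m+k₁+1) (k₀+m+k₁+d)).card = d := by rw [Nat.card_Icc]; omega
        have h6 : (Finset.Icc (k₀+m+k₁+1) (k₀+m+k₁+d)) ∩ L =
            L ∩ (Finset.Icc (k₀+m+k₁+1) (k₀+m+k₁+d)) := Finset.inter_comm _ _
        rw [h2, Finset.card_union_of_disjoint h3] at h1
        rw [h6] at h4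
        omega
      have hF1card : (topPart (Finset.Icc (k₀+1) (k₀+d) \ L) Bm.card).card = Bm.card :=
        topPart_card _ _ hc1
      have hF2card : (topPart (Finset.Icc (k₀+m+k₁+1) (k₀+m+k₁+d) \ L) Bm2.card).card
          = Bm2.card := topPart_card _ _ hc2
      -- the partition of L and the total count
      have hpart : L = LoA ∪ (Bm ∪ (MidL ∪ (Bm2 ∪ Hi))) := by
        ext x
        simp only [hLoA, hBm, hMidL, hBm2, hHi, Finset.mem_union, Finset.mem_inter,
          Finset.mem_sdiff, Finset.mem_Icc]
        by_cases hxL : x ∈ L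
        · have := hLb x hxL; simp only [hxL, true_and, true_iff]; omega
        · simp [hxL]
      have dj1 : Disjoint Bm2 Hi := Finset.disjoint_left.2 fun x h1 h2 => by
        have := hBm2b x h1; have := hHib x h2; omega
      have dj2 : Disjoint MidL (Bm2 ∪ Hi) := Finset.disjoint_left.2 fun x h1 h2 => by
        have := hMidLb x h1
        rcases Finset.mem_union.1 h2 with h | h
        · have := hBm2b x h; omega
        · have := hHib x h; omega
      have dj3 : Disjoint Bm (MidL ∪ (Bm2 ∪ Hi)) := Finset.disjoint_left.2 fun x h1 h2 => by
        have := hBmb x h1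
        rcases Finset.mem_union.1 h2 with h | h
        · have := hMidLb x h; omega
        · rcases Finset.mem_union.1 h with h | h
          · have := hBm2b x h; omega
          · have := hHib x h; omega
      have dj4 : Disjoint LoA (Bm ∪ (MidL ∪ (Bm2 ∪ Hi))) :=
        Finset.disjoint_left.2 fun x h1 h2 => by
          have := hLoAb x h1
          rcases Finset.mem_union.1 h2 with h | h
          · have := hBmb x h; omega
          · rcases Finset.mem_union.1 h with h | h
            · have := hMidLb x h; omega
            · rcases Finset.mem_union.1 h with h | h
              · have := hBm2b x h; omega
              · have := hHib x h; omega
      have hsum : LoA.card + (Bm.card + (MidL.card + (Bm2.card + Hi.card))) = d + 1 := by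
        rw [← Finset.card_union_of_disjoint dj1, ← Finset.card_union_of_disjoint dj2,
          ← Finset.card_union_of_disjoint dj3, ← Finset.card_union_of_disjoint dj4,
          ← hpart, hcard]
      -- ===== LHS normalization =====
      have h1L : Finset.Icc (k₀+m+k₁+1) (k₀+m+k₁+d) \
          (L ∩ (Finset.Icc 1 (k₀+m+k₁) ∪ Finset.Icc (k₀+m+k₁+1) (k₀+m+k₁+d) ∪
            Finset.Icc (k₀+m+k₁+m'+1) (n+m-d+m'-d))) =
          Finset.Icc (k₀+m+k₁+1) (k₀+m+k₁+d) \ L := by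
        ext x
        simp only [Finset.mem_sdiff, Finset.mem_inter, Finset.mem_union, Finset.mem_Icc]
        by_cases hxL : x ∈ L <;> simp [hxL] <;> omega
      have h2L : L ∩ (Finset.Icc 1 (k₀+m+k₁) ∪ Finset.Icc (k₀+m+k₁+1) (k₀+m+k₁+d) ∪
            Finset.Icc (k₀+m+k₁+m'+1) (n+m-d+m'-d)) = LoA ∪ Bm ∪ MidL ∪ Hi := by
        ext x
        simp only [hLoA, hBm, hMidL, hHi, Finset.mem_inter, Finset.mem_union,
          Finset.mem_sdiff, Finset.mem_Icc]
        by_cases hxL : x ∈ L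
        · have := hLb x hxL; simp only [hxL, true_and]; omega
        · simp [hxL]
      rw [h1L, h2L]
      have himgK : ((LoA ∪ Bm ∪ MidL ∪ Hi) ∪
            topPart (Finset.Icc (k₀+m+k₁+1) (k₀+m+k₁+d) \ L) Bm2.card).image
            (fun y => if y ≤ k₀+m+k₁+d then y else y - (m'-d)) =
          LoA ∪ Bm ∪ MidL ∪ Hi.image (fun y => y - (m'-d)) ∪
            topPart (Finset.Icc (k₀+m+k₁+1) (k₀+m+k₁+d) \ L) Bm2.card := by
        rw [Finset.image_union, Finset.image_union, Finset.image_union, Finset.image_union,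
          image_ite_of_le LoA _ _ (fun x hx => by have := hLoAb x hx; omega),
          image_ite_of_le Bm _ _ (fun x hx => by have := hBmb x hx; omega),
          image_ite_of_le MidL _ _ (fun x hx => by have := hMidLb x hx; omega),
          image_ite_of_gt Hi _ _ (fun x hx => by have := hHib x hx; omega),
          image_ite_of_le _ _ _ (fun x hx => by have := hF2b x hx; omega)]
      rw [himgK]
      -- inner components on the LHS
      have eLoA1 : LoA ∩ (Finset.Icc 1 k₀ ∪ Finset.Icc (k₀+1) (k₀+d) ∪
          Finset.Icc (k₀+m+1) (n+m-d)) = LoA :=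
        Finset.inter_eq_left.2 fun x hx => by
          have := hLoAb x hx
          simp only [Finset.mem_union, Finset.mem_Icc]; omega
      have eBm1 : Bm ∩ (Finset.Icc 1 k₀ ∪ Finset.Icc (k₀+1) (k₀+d) ∪
          Finset.Icc (k₀+m+1) (n+m-d)) = ∅ := by
        rw [Finset.eq_empty_iff_forall_notMem]
        intro x hx
        rw [Finset.mem_inter] at hx
        have h2 := hx.2
        simp only [Finset.mem_union, Finset.mem_Icc] at h2
        have := hBmb x hx.1; omega
      have eMidL1 : MidL ∩ (Finset.Icc 1 k₀ ∪ Finset.Icc (k₀+1) (k₀+d) ∪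
          Finset.Icc (k₀+m+1) (n+m-d)) = MidL :=
        Finset.inter_eq_left.2 fun x hx => by
          have := hMidLb x hx
          simp only [Finset.mem_union, Finset.mem_Icc]; omega
      have eHiS1 : Hi.image (fun y => y - (m'-d)) ∩ (Finset.Icc 1 k₀ ∪
          Finset.Icc (k₀+1) (k₀+d) ∪ Finset.Icc (k₀+m+1) (n+m-d)) =
          Hi.image (fun y => y - (m'-d)) :=
        Finset.inter_eq_left.2 fun y hy => by
          obtain ⟨w, hw, rfl⟩ := Finset.mem_image.1 hy
          have := hHib w hw
          simp only [Finset.mem_union, Finset.mem_Icc]; omega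
      have eF21 : topPart (Finset.Icc (k₀+m+k₁+1) (k₀+m+k₁+d) \ L) Bm2.card ∩
          (Finset.Icc 1 k₀ ∪ Finset.Icc (k₀+1) (k₀+d) ∪
            Finset.Icc (k₀+m+1) (n+m-d)) =
          topPart (Finset.Icc (k₀+m+k₁+1) (k₀+m+k₁+d) \ L) Bm2.card :=
        Finset.inter_eq_left.2 fun x hx => by
          have := hF2b x hx
          simp only [Finset.mem_union, Finset.mem_Icc]; omega
      have hKS1 : (LoA ∪ Bm ∪ MidL ∪ Hi.image (fun y => y - (m'-d)) ∪
            topPart (Finset.Icc (k₀+m+k₁+1) (k₀+m+k₁+d) \ L) Bm2.card) ∩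
            (Finset.Icc 1 k₀ ∪ Finset.Icc (k₀+1) (k₀+d) ∪
              Finset.Icc (k₀+m+1) (n+m-d)) =
          LoA ∪ MidL ∪ Hi.image (fun y => y - (m'-d)) ∪
            topPart (Finset.Icc (k₀+m+k₁+1) (k₀+m+k₁+d) \ L) Bm2.card := by
        rw [Finset.union_inter_distrib_right, Finset.union_inter_distrib_right,
          Finset.union_inter_distrib_right, Finset.union_inter_distrib_right,
          eLoA1, eBm1, eMidL1, eHiS1, eF21, Finset.union_empty]
      rw [hKS1]
      have hKdiff : Finset.Icc (k₀+1) (k₀+d) \ (LoA ∪ MidL ∪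
            Hi.image (fun y => y - (m'-d)) ∪
            topPart (Finset.Icc (k₀+m+k₁+1) (k₀+m+k₁+d) \ L) Bm2.card) =
          Finset.Icc (k₀+1) (k₀+d) \ L := by
        ext x
        rw [Finset.mem_sdiff, Finset.mem_sdiff]
        constructor
        · rintro ⟨h1, h2⟩
          refine ⟨h1, fun hxL => h2 ?_⟩
          have := Finset.mem_Icc.1 h1
          refine Finset.mem_union_left _ (Finset.mem_union_left _ (Finset.mem_union_left _ ?_))
          rw [hLoA, Finset.mem_inter, Finset.mem_Icc]
          exact ⟨hxL, by omega, by omega⟩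
        · rintro ⟨h1, h2⟩
          have hb' := Finset.mem_Icc.1 h1
          refine ⟨h1, fun hmem => ?_⟩
          rcases Finset.mem_union.1 hmem with hmem | hmem
          · rcases Finset.mem_union.1 hmem with hmem | hmem
            · rcases Finset.mem_union.1 hmem with hmem | hmem
              · exact h2 (hLoAb x hmem).1
              · have := hMidLb x hmem; omega
            · obtain ⟨w, hw, hwx⟩ := Finset.mem_image.1 hmem
              have := hHib w hw; omega
          · have := hF2b x hmem; omega
      rw [hKdiff]
      have hKBm : (LoA ∪ Bm ∪ MidL ∪ Hi.image (fun y => y - (m'-d)) ∪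
            topPart (Finset.Icc (k₀+m+k₁+1) (k₀+m+k₁+d) \ L) Bm2.card) ∩
            (Finset.Icc (k₀+1) (k₀+m) \ Finset.Icc (k₀+1) (k₀+d)) = Bm := by
        have e1 : LoA ∩ (Finset.Icc (k₀+1) (k₀+m) \ Finset.Icc (k₀+1) (k₀+d)) = ∅ := by
          rw [Finset.eq_empty_iff_forall_notMem]
          intro x hx
          rw [Finset.mem_inter] at hx
          have h2 := hx.2
          rw [Finset.mem_sdiff, Finset.mem_Icc, Finset.mem_Icc] at h2
          have := hLoAb x hx.1; omega
        have e2 : Bm ∩ (Finset.Icc (k₀+1) (k₀+m) \ Finset.Icc (k₀+1) (k₀+d)) = Bm :=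
          Finset.inter_eq_left.2 fun x hx => by rw [hBm, Finset.mem_inter] at hx; exact hx.2
        have e3 : MidL ∩ (Finset.Icc (k₀+1) (k₀+m) \ Finset.Icc (k₀+1) (k₀+d)) = ∅ := by
          rw [Finset.eq_empty_iff_forall_notMem]
          intro x hx
          rw [Finset.mem_inter] at hx
          have h2 := hx.2
          rw [Finset.mem_sdiff, Finset.mem_Icc, Finset.mem_Icc] at h2
          have := hMidLb x hx.1; omega
        have e4 : Hi.image (fun y => y - (m'-d)) ∩
            (Finset.Icc (k₀+1) (k₀+m) \ Finset.Icc (k₀+1) (k₀+d)) = ∅ := by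
          rw [Finset.eq_empty_iff_forall_notMem]
          intro x hx
          rw [Finset.mem_inter] at hx
          have h2 := hx.2
          rw [Finset.mem_sdiff, Finset.mem_Icc, Finset.mem_Icc] at h2
          obtain ⟨w, hw, hwx⟩ := Finset.mem_image.1 hx.1
          have := hHib w hw; omega
        have e5 : topPart (Finset.Icc (k₀+m+k₁+1) (k₀+m+k₁+d) \ L) Bm2.card ∩
            (Finset.Icc (k₀+1) (k₀+m) \ Finset.Icc (k₀+1) (k₀+d)) = ∅ := by
          rw [Finset.eq_empty_iff_forall_notMem]
          intro x hx
          rw [Finset.mem_inter] at hx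
          have h2 := hx.2
          rw [Finset.mem_sdiff, Finset.mem_Icc, Finset.mem_Icc] at h2
          have := hF2b x hx.1; omega
        rw [Finset.union_inter_distrib_right, Finset.union_inter_distrib_right,
          Finset.union_inter_distrib_right, Finset.union_inter_distrib_right,
          e1, e2, e3, e4, e5, Finset.empty_union, Finset.union_empty, Finset.union_empty,
          Finset.union_empty]
      rw [hKBm]
      have hRL : ((LoA ∪ MidL ∪ Hi.image (fun y => y - (m'-d)) ∪
            topPart (Finset.Icc (k₀+m+k₁+1) (k₀+m+k₁+d) \ L) Bm2.card) ∪
            topPart (Finset.Icc (k₀+1) (k₀+d) \ L) Bm.card).image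
            (fun y => if y ≤ k₀+d then y else y - (m-d)) =
          LoA ∪ MidL.image (fun y => y - (m-d)) ∪
            Hi.image (fun y => y - (m-d) - (m'-d)) ∪
            topPart (Finset.Icc (k₀+1) (k₀+d) \ L) Bm.card ∪
            (topPart (Finset.Icc (k₀+m+k₁+1) (k₀+m+k₁+d) \ L) Bm2.card).image
              (fun y => y - (m-d)) := by
        rw [Finset.image_union, Finset.image_union, Finset.image_union, Finset.image_union,
          image_ite_of_le LoA _ _ (fun x hx => by have := hLoAb x hx; omega),
          image_ite_of_gt MidL _ _ (fun x hx => by have := hMidLb x hx; omega),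
          image_ite_of_gt (Hi.image (fun y => y - (m'-d))) _ _ (fun y hy => by
            obtain ⟨w, hw, hwx⟩ := Finset.mem_image.1 hy
            have := hHib w hw; omega),
          image_ite_of_gt (topPart (Finset.Icc (k₀+m+k₁+1) (k₀+m+k₁+d) \ L) Bm2.card) _ _
            (fun x hx => by have := hF2b x hx; omega),
          image_ite_of_le (topPart (Finset.Icc (k₀+1) (k₀+d) \ L) Bm.card) _ _
            (fun x hx => by have := hF1b x hx; omega),
          Finset.image_image]
        have hcmp : ((fun y => y - (m-d)) ∘ (fun y => y - (m'-d))) =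
            (fun y : ℕ => y - (m-d) - (m'-d)) := funext fun y => by
          simp only [Function.comp]; omega
        rw [hcmp]
        exact Finset.union_right_comm _ _ _
      rw [hRL]
      -- LHS side conditions
      have hKsub : LoA ∪ Bm ∪ MidL ∪ Hi.image (fun y => y - (m'-d)) ∪
          topPart (Finset.Icc (k₀+m+k₁+1) (k₀+m+k₁+d) \ L) Bm2.card ⊆
          Finset.Icc 1 (n+m-d) := by
        intro x hx
        rw [Finset.mem_Icc]
        rcases Finset.mem_union.1 hx with hx | hx
        · rcases Finset.mem_union.1 hx with hx | hx
          · rcases Finset.mem_union.1 hx with hx | hx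
            · rcases Finset.mem_union.1 hx with hx | hx
              · have := hLoAb x hx; omega
              · have := hBmb x hx; omega
            · have := hMidLb x hx; omega
          · obtain ⟨w, hw, hwx⟩ := Finset.mem_image.1 hx
            have := hHib w hw; omega
        · have := hF2b x hx; omega
      have hKcard : (LoA ∪ Bm ∪ MidL ∪ Hi.image (fun y => y - (m'-d)) ∪
          topPart (Finset.Icc (k₀+m+k₁+1) (k₀+m+k₁+d) \ L) Bm2.card).card = d + 1 := by
        have cHiS : (Hi.image (fun y => y - (m'-d))).card = Hi.card := by
          apply Finset.card_image_of_injOn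
          intro x hx y hy hxy
          simp only at hxy
          have := hHib x (Finset.mem_coe.1 hx)
          have := hHib y (Finset.mem_coe.1 hy)
          omega
        have dk4 : Disjoint LoA Bm := Finset.disjoint_left.2 fun x h1 h2 => by
          have := hLoAb x h1; have := hBmb x h2; omega
        have dk3 : Disjoint (LoA ∪ Bm) MidL := Finset.disjoint_left.2 fun x h1 h2 => by
          have := hMidLb x h2
          rcases Finset.mem_union.1 h1 with h | h
          · have := hLoAb x h; omega
          · have := hBmb x h; omega
        have dk2 : Disjoint (LoA ∪ Bm ∪ MidL) (Hi.image (fun y => y - (m'-d))) :=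
          Finset.disjoint_left.2 fun x h1 h2 => by
            obtain ⟨w, hw, hwx⟩ := Finset.mem_image.1 h2
            have := hHib w hw
            rcases Finset.mem_union.1 h1 with h | h
            · rcases Finset.mem_union.1 h with h | h
              · have := hLoAb x h; omega
              · have := hBmb x h; omega
            · have := hMidLb x h; omega
        have dk1 : Disjoint (LoA ∪ Bm ∪ MidL ∪ Hi.image (fun y => y - (m'-d)))
            (topPart (Finset.Icc (k₀+m+k₁+1) (k₀+m+k₁+d) \ L) Bm2.card) :=
          Finset.disjoint_left.2 fun x h1 h2 => by
            have hf := hF2b x h2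
            rcases Finset.mem_union.1 h1 with h | h
            · rcases Finset.mem_union.1 h with h | h
              · rcases Finset.mem_union.1 h with h | h
                · exact hf.1 (hLoAb x h).1
                · exact hf.1 (hBmb x h).1
              · exact hf.1 (hMidLb x h).1
            · obtain ⟨w, hw, hwx⟩ := Finset.mem_image.1 h
              have := hHib w hw; omega
        rw [Finset.card_union_of_disjoint dk1, Finset.card_union_of_disjoint dk2,
          Finset.card_union_of_disjoint dk3, Finset.card_union_of_disjoint dk4,
          cHiS, hF2card]
        omega
      have hnKB1 : ¬ (LoA ∪ Bm ∪ MidL ∪ Hi.image (fun y => y - (m'-d)) ∪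
          topPart (Finset.Icc (k₀+m+k₁+1) (k₀+m+k₁+d) \ L) Bm2.card ⊆
          Finset.Icc (k₀+1) (k₀+m)) := by
        rw [Finset.not_subset]
        have hbb := hLb b hbL
        by_cases c1 : b ≤ k₀+d
        · refine ⟨b, ?_, by rw [Finset.mem_Icc]; omega⟩
          refine Finset.mem_union_left _ (Finset.mem_union_left _ (Finset.mem_union_left _
            (Finset.mem_union_left _ ?_)))
          rw [hLoA, Finset.mem_inter, Finset.mem_Icc]
          exact ⟨hbL, by omega, by omega⟩
        by_cases c2 : b ≤ k₀+m+k₁+d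
        · refine ⟨b, ?_, by rw [Finset.mem_Icc]; omega⟩
          refine Finset.mem_union_left _ (Finset.mem_union_left _
            (Finset.mem_union_right _ ?_))
          rw [hMidL, Finset.mem_inter, Finset.mem_Icc]
          exact ⟨hbL, by omega, by omega⟩
        by_cases c3 : b ≤ k₀+m+k₁+m'
        · have hbBm2 : b ∈ Bm2 := by
            rw [hBm2, Finset.mem_inter, Finset.mem_sdiff, Finset.mem_Icc, Finset.mem_Icc]
            exact ⟨hbL, ⟨by omega, by omega⟩, by omega⟩
          have hpos : 0 < (topPart (Finset.Icc (k₀+m+k₁+1) (k₀+m+k₁+d) \ L) Bm2.card).card := by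
            rw [hF2card]
            exact Finset.card_pos.2 ⟨b, hbBm2⟩
          obtain ⟨z, hz⟩ := Finset.card_pos.1 hpos
          have := hF2b z hz
          exact ⟨z, Finset.mem_union_right _ hz, by rw [Finset.mem_Icc]; omega⟩
        · refine ⟨b - (m'-d), ?_, by rw [Finset.mem_Icc]; omega⟩
          refine Finset.mem_union_left _ (Finset.mem_union_right _ ?_)
          refine Finset.mem_image.2 ⟨b, ?_, rfl⟩
          rw [hHi, Finset.mem_inter, Finset.mem_Icc]
          exact ⟨hbL, by omega, by omega⟩
      -- ===== RHS normalization =====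
      have h1R : Finset.Icc (k₀+1) (k₀+d) \
          (L ∩ (Finset.Icc 1 k₀ ∪ Finset.Icc (k₀+1) (k₀+d) ∪
            Finset.Icc (k₀+m+1) (n+m-d+m'-d))) =
          Finset.Icc (k₀+1) (k₀+d) \ L := by
        ext x
        simp only [Finset.mem_sdiff, Finset.mem_inter, Finset.mem_union, Finset.mem_Icc]
        by_cases hxL : x ∈ L <;> simp [hxL] <;> omega
      have h2R : L ∩ (Finset.Icc 1 k₀ ∪ Finset.Icc (k₀+1) (k₀+d) ∪
            Finset.Icc (k₀+m+1) (n+m-d+m'-d)) = LoA ∪ MidL ∪ Bm2 ∪ Hi := by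
        ext x
        simp only [hLoA, hMidL, hBm2, hHi, Finset.mem_inter, Finset.mem_union,
          Finset.mem_sdiff, Finset.mem_Icc]
        by_cases hxL : x ∈ L
        · have := hLb x hxL; simp only [hxL, true_and]; omega
        · simp [hxL]
      rw [h1R, h2R]
      have himgK' : ((LoA ∪ MidL ∪ Bm2 ∪ Hi) ∪
            topPart (Finset.Icc (k₀+1) (k₀+d) \ L) Bm.card).image
            (fun y => if y ≤ k₀+d then y else y - (m-d)) =
          LoA ∪ MidL.image (fun y => y - (m-d)) ∪ Bm2.image (fun y => y - (m-d)) ∪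
            Hi.image (fun y => y - (m-d)) ∪
            topPart (Finset.Icc (k₀+1) (k₀+d) \ L) Bm.card := by
        rw [Finset.image_union, Finset.image_union, Finset.image_union, Finset.image_union,
          image_ite_of_le LoA _ _ (fun x hx => by have := hLoAb x hx; omega),
          image_ite_of_gt MidL _ _ (fun x hx => by have := hMidLb x hx; omega),
          image_ite_of_gt Bm2 _ _ (fun x hx => by have := hBm2b x hx; omega),
          image_ite_of_gt Hi _ _ (fun x hx => by have := hHib x hx; omega),
          image_ite_of_le _ _ _ (fun x hx => by have := hF1b x hx; omega)]
      rw [himgK']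
      -- inner components on the RHS
      have f1 : LoA ∩ (Finset.Icc 1 (k₀+d+k₁) ∪ Finset.Icc (k₀+d+k₁+1) (k₀+d+k₁+d) ∪
          Finset.Icc (k₀+d+k₁+m'+1) (n+m'-d)) = LoA :=
        Finset.inter_eq_left.2 fun x hx => by
          have := hLoAb x hx
          simp only [Finset.mem_union, Finset.mem_Icc]; omega
      have f2 : MidL.image (fun y => y - (m-d)) ∩ (Finset.Icc 1 (k₀+d+k₁) ∪
          Finset.Icc (k₀+d+k₁+1) (k₀+d+k₁+d) ∪
          Finset.Icc (k₀+d+k₁+m'+1) (n+m'-d)) = MidL.image (fun y => y - (m-d)) :=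
        Finset.inter_eq_left.2 fun y hy => by
          obtain ⟨w, hw, rfl⟩ := Finset.mem_image.1 hy
          have := hMidLb w hw
          simp only [Finset.mem_union, Finset.mem_Icc]; omega
      have f3 : Bm2.image (fun y => y - (m-d)) ∩ (Finset.Icc 1 (k₀+d+k₁) ∪
          Finset.Icc (k₀+d+k₁+1) (k₀+d+k₁+d) ∪
          Finset.Icc (k₀+d+k₁+m'+1) (n+m'-d)) = ∅ := by
        rw [Finset.eq_empty_iff_forall_notMem]
        intro x hx
        rw [Finset.mem_inter] at hx
        have h2 := hx.2
        simp only [Finset.mem_union, Finset.mem_Icc] at h2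
        obtain ⟨w, hw, hwx⟩ := Finset.mem_image.1 hx.1
        have := hBm2b w hw; omega
      have f4 : Hi.image (fun y => y - (m-d)) ∩ (Finset.Icc 1 (k₀+d+k₁) ∪
          Finset.Icc (k₀+d+k₁+1) (k₀+d+k₁+d) ∪
          Finset.Icc (k₀+d+k₁+m'+1) (n+m'-d)) = Hi.image (fun y => y - (m-d)) :=
        Finset.inter_eq_left.2 fun y hy => by
          obtain ⟨w, hw, rfl⟩ := Finset.mem_image.1 hy
          have := hHib w hw
          simp only [Finset.mem_union, Finset.mem_Icc]; omega
      have f5 : topPart (Finset.Icc (k₀+1) (k₀+d) \ L) Bm.card ∩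
          (Finset.Icc 1 (k₀+d+k₁) ∪ Finset.Icc (k₀+d+k₁+1) (k₀+d+k₁+d) ∪
          Finset.Icc (k₀+d+k₁+m'+1) (n+m'-d)) =
          topPart (Finset.Icc (k₀+1) (k₀+d) \ L) Bm.card :=
        Finset.inter_eq_left.2 fun x hx => by
          have := hF1b x hx
          simp only [Finset.mem_union, Finset.mem_Icc]; omega
      have hK'S2 : (LoA ∪ MidL.image (fun y => y - (m-d)) ∪ Bm2.image (fun y => y - (m-d)) ∪
            Hi.image (fun y => y - (m-d)) ∪
            topPart (Finset.Icc (k₀+1) (k₀+d) \ L) Bm.card) ∩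
            (Finset.Icc 1 (k₀+d+k₁) ∪ Finset.Icc (k₀+d+k₁+1) (k₀+d+k₁+d) ∪
              Finset.Icc (k₀+d+k₁+m'+1) (n+m'-d)) =
          LoA ∪ MidL.image (fun y => y - (m-d)) ∪ Hi.image (fun y => y - (m-d)) ∪
            topPart (Finset.Icc (k₀+1) (k₀+d) \ L) Bm.card := by
        rw [Finset.union_inter_distrib_right, Finset.union_inter_distrib_right,
          Finset.union_inter_distrib_right, Finset.union_inter_distrib_right,
          f1, f2, f3, f4, f5, Finset.union_empty]
      rw [hK'S2]
      have hK'Bm2 : (LoA ∪ MidL.image (fun y => y - (m-d)) ∪ Bm2.image (fun y => y - (m-d)) ∪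
            Hi.image (fun y => y - (m-d)) ∪
            topPart (Finset.Icc (k₀+1) (k₀+d) \ L) Bm.card) ∩
            (Finset.Icc (k₀+d+k₁+1) (k₀+d+k₁+m') \ Finset.Icc (k₀+d+k₁+1) (k₀+d+k₁+d)) =
          Bm2.image (fun y => y - (m-d)) := by
        have g1 : LoA ∩ (Finset.Icc (k₀+d+k₁+1) (k₀+d+k₁+m') \
            Finset.Icc (k₀+d+k₁+1) (k₀+d+k₁+d)) = ∅ := by
          rw [Finset.eq_empty_iff_forall_notMem]
          intro x hx
          rw [Finset.mem_inter] at hx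
          have h2 := hx.2
          rw [Finset.mem_sdiff, Finset.mem_Icc, Finset.mem_Icc] at h2
          have := hLoAb x hx.1; omega
        have g2 : MidL.image (fun y => y - (m-d)) ∩ (Finset.Icc (k₀+d+k₁+1) (k₀+d+k₁+m') \
            Finset.Icc (k₀+d+k₁+1) (k₀+d+k₁+d)) = ∅ := by
          rw [Finset.eq_empty_iff_forall_notMem]
          intro x hx
          rw [Finset.mem_inter] at hx
          have h2 := hx.2
          rw [Finset.mem_sdiff, Finset.mem_Icc, Finset.mem_Icc] at h2
          obtain ⟨w, hw, hwx⟩ := Finset.mem_image.1 hx.1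
          have := hMidLb w hw; omega
        have g3 : Bm2.image (fun y => y - (m-d)) ∩ (Finset.Icc (k₀+d+k₁+1) (k₀+d+k₁+m') \
            Finset.Icc (k₀+d+k₁+1) (k₀+d+k₁+d)) = Bm2.image (fun y => y - (m-d)) :=
          Finset.inter_eq_left.2 fun y hy => by
            obtain ⟨w, hw, rfl⟩ := Finset.mem_image.1 hy
            have := hBm2b w hw
            simp only [Finset.mem_sdiff, Finset.mem_Icc]; omega
        have g4 : Hi.image (fun y => y - (m-d)) ∩ (Finset.Icc (k₀+d+k₁+1) (k₀+d+k₁+m') \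
            Finset.Icc (k₀+d+k₁+1) (k₀+d+k₁+d)) = ∅ := by
          rw [Finset.eq_empty_iff_forall_notMem]
          intro x hx
          rw [Finset.mem_inter] at hx
          have h2 := hx.2
          rw [Finset.mem_sdiff, Finset.mem_Icc, Finset.mem_Icc] at h2
          obtain ⟨w, hw, hwx⟩ := Finset.mem_image.1 hx.1
          have := hHib w hw; omega
        have g5 : topPart (Finset.Icc (k₀+1) (k₀+d) \ L) Bm.card ∩
            (Finset.Icc (k₀+d+k₁+1) (k₀+d+k₁+m') \
            Finset.Icc (k₀+d+k₁+1) (k₀+d+k₁+d)) = ∅ := by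
          rw [Finset.eq_empty_iff_forall_notMem]
          intro x hx
          rw [Finset.mem_inter] at hx
          have h2 := hx.2
          rw [Finset.mem_sdiff, Finset.mem_Icc, Finset.mem_Icc] at h2
          have := hF1b x hx.1; omega
        rw [Finset.union_inter_distrib_right, Finset.union_inter_distrib_right,
          Finset.union_inter_distrib_right, Finset.union_inter_distrib_right,
          g1, g2, g3, g4, g5, Finset.empty_union, Finset.empty_union, Finset.union_empty,
          Finset.union_empty]
      rw [hK'Bm2]
      have hBm2Scard : (Bm2.image (fun y => y - (m-d))).card = Bm2.card := by
        apply Finset.card_image_of_injOn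
        intro x hx y hy hxy
        simp only at hxy
        have := hBm2b x (Finset.mem_coe.1 hx)
        have := hBm2b y (Finset.mem_coe.1 hy)
        omega
      rw [hBm2Scard]
      have hK'diff : Finset.Icc (k₀+d+k₁+1) (k₀+d+k₁+d) \
            (LoA ∪ MidL.image (fun y => y - (m-d)) ∪ Hi.image (fun y => y - (m-d)) ∪
              topPart (Finset.Icc (k₀+1) (k₀+d) \ L) Bm.card) =
          (Finset.Icc (k₀+m+k₁+1) (k₀+m+k₁+d) \ L).image (fun y => y - (m-d)) := by
        ext x
        constructor
        · intro hx
          rw [Finset.mem_sdiff, Finset.mem_Icc] at hx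
          obtain ⟨⟨hx1, hx2⟩, hx3⟩ := hx
          refine Finset.mem_image.2 ⟨x + (m-d), ?_, by omega⟩
          rw [Finset.mem_sdiff, Finset.mem_Icc]
          refine ⟨⟨by omega, by omega⟩, fun hxl => hx3 ?_⟩
          refine Finset.mem_union_left _ (Finset.mem_union_left _
            (Finset.mem_union_right _ ?_))
          refine Finset.mem_image.2 ⟨x + (m-d), ?_, by omega⟩
          rw [hMidL, Finset.mem_inter, Finset.mem_Icc]
          exact ⟨hxl, by omega, by omega⟩
        · intro hx
          obtain ⟨w, hw, rfl⟩ := Finset.mem_image.1 hx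
          rw [Finset.mem_sdiff, Finset.mem_Icc] at hw
          obtain ⟨⟨hw1, hw2⟩, hw3⟩ := hw
          rw [Finset.mem_sdiff, Finset.mem_Icc]
          refine ⟨⟨by omega, by omega⟩, fun hmem => ?_⟩
          rcases Finset.mem_union.1 hmem with hmem | hmem
          · rcases Finset.mem_union.1 hmem with hmem | hmem
            · rcases Finset.mem_union.1 hmem with hmem | hmem
              · have := hLoAb _ hmem; omega
              · obtain ⟨v, hv, hvx⟩ := Finset.mem_image.1 hmem
                have := hMidLb v hv
                have hvw : v = w := by omega
                exact hw3 (hvw ▸ this.1)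
            · obtain ⟨v, hv, hvx⟩ := Finset.mem_image.1 hmem
              have := hHib v hv; omega
          · have := hF1b _ hmem; omega
      rw [hK'diff]
      have htop : topPart ((Finset.Icc (k₀+m+k₁+1) (k₀+m+k₁+d) \ L).image
            (fun y => y - (m-d))) Bm2.card =
          (topPart (Finset.Icc (k₀+m+k₁+1) (k₀+m+k₁+d) \ L) Bm2.card).image
            (fun y => y - (m-d)) :=
        topPart_image_sub _ (m-d) Bm2.card (fun x hx => by
          rw [Finset.mem_sdiff, Finset.mem_Icc] at hx; omega)
      rw [htop]
      have hRR : ((LoA ∪ MidL.image (fun y => y - (m-d)) ∪ Hi.image (fun y => y - (m-d)) ∪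
            topPart (Finset.Icc (k₀+1) (k₀+d) \ L) Bm.card) ∪
            (topPart (Finset.Icc (k₀+m+k₁+1) (k₀+m+k₁+d) \ L) Bm2.card).image
              (fun y => y - (m-d))).image
            (fun y => if y ≤ k₀+d+k₁+d then y else y - (m'-d)) =
          LoA ∪ MidL.image (fun y => y - (m-d)) ∪
            Hi.image (fun y => y - (m-d) - (m'-d)) ∪
            topPart (Finset.Icc (k₀+1) (k₀+d) \ L) Bm.card ∪
            (topPart (Finset.Icc (k₀+m+k₁+1) (k₀+m+k₁+d) \ L) Bm2.card).image
              (fun y => y - (m-d)) := by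
        rw [Finset.image_union, Finset.image_union, Finset.image_union, Finset.image_union,
          image_ite_of_le LoA _ _ (fun x hx => by have := hLoAb x hx; omega),
          image_ite_of_le (MidL.image (fun y => y - (m-d))) _ _ (fun y hy => by
            obtain ⟨w, hw, hwx⟩ := Finset.mem_image.1 hy
            have := hMidLb w hw; omega),
          image_ite_of_gt (Hi.image (fun y => y - (m-d))) _ _ (fun y hy => by
            obtain ⟨w, hw, hwx⟩ := Finset.mem_image.1 hy
            have := hHib w hw; omega),
          image_ite_of_le (topPart (Finset.Icc (k₀+1) (k₀+d) \ L) Bm.card) _ _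
            (fun x hx => by have := hF1b x hx; omega),
          image_ite_of_le ((topPart (Finset.Icc (k₀+m+k₁+1) (k₀+m+k₁+d) \ L) Bm2.card).image
              (fun y => y - (m-d))) _ _ (fun y hy => by
            obtain ⟨w, hw, hwx⟩ := Finset.mem_image.1 hy
            have := hF2b w hw; omega),
          Finset.image_image]
        have hcmp2 : ((fun y => y - (m'-d)) ∘ (fun y => y - (m-d))) =
            (fun y : ℕ => y - (m-d) - (m'-d)) := funext fun y => rfl
        rw [hcmp2]
      rw [hRR]
      -- RHS side conditions
      have hK'sub : LoA ∪ MidL.image (fun y => y - (m-d)) ∪ Bm2.image (fun y => y - (m-d)) ∪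
          Hi.image (fun y => y - (m-d)) ∪
          topPart (Finset.Icc (k₀+1) (k₀+d) \ L) Bm.card ⊆
          Finset.Icc 1 (n+m'-d) := by
        intro x hx
        rw [Finset.mem_Icc]
        rcases Finset.mem_union.1 hx with hx | hx
        · rcases Finset.mem_union.1 hx with hx | hx
          · rcases Finset.mem_union.1 hx with hx | hx
            · rcases Finset.mem_union.1 hx with hx | hx
              · have := hLoAb x hx; omega
              · obtain ⟨w, hw, hwx⟩ := Finset.mem_image.1 hx
                have := hMidLb w hw; omega
            · obtain ⟨w, hw, hwx⟩ := Finset.mem_image.1 hx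
              have := hBm2b w hw; omega
          · obtain ⟨w, hw, hwx⟩ := Finset.mem_image.1 hx
            have := hHib w hw; omega
        · have := hF1b x hx; omega
      have hK'card : (LoA ∪ MidL.image (fun y => y - (m-d)) ∪ Bm2.image (fun y => y - (m-d)) ∪
          Hi.image (fun y => y - (m-d)) ∪
          topPart (Finset.Icc (k₀+1) (k₀+d) \ L) Bm.card).card = d + 1 := by
        have cMidLS : (MidL.image (fun y => y - (m-d))).card = MidL.card := by
          apply Finset.card_image_of_injOn
          intro x hx y hy hxy
          simp only at hxy
          have := hMidLb x (Finset.mem_coe.1 hx)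
          have := hMidLb y (Finset.mem_coe.1 hy)
          omega
        have cHiS' : (Hi.image (fun y => y - (m-d))).card = Hi.card := by
          apply Finset.card_image_of_injOn
          intro x hx y hy hxy
          simp only at hxy
          have := hHib x (Finset.mem_coe.1 hx)
          have := hHib y (Finset.mem_coe.1 hy)
          omega
        have ek4 : Disjoint LoA (MidL.image (fun y => y - (m-d))) :=
          Finset.disjoint_left.2 fun x h1 h2 => by
            obtain ⟨w, hw, hwx⟩ := Finset.mem_image.1 h2
            have := hMidLb w hw
            have := hLoAb x h1; omega
        have ek3 : Disjoint (LoA ∪ MidL.image (fun y => y - (m-d)))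
            (Bm2.image (fun y => y - (m-d))) :=
          Finset.disjoint_left.2 fun x h1 h2 => by
            obtain ⟨w, hw, hwx⟩ := Finset.mem_image.1 h2
            have := hBm2b w hw
            rcases Finset.mem_union.1 h1 with h | h
            · have := hLoAb x h; omega
            · obtain ⟨v, hv, hvx⟩ := Finset.mem_image.1 h
              have := hMidLb v hv; omega
        have ek2 : Disjoint (LoA ∪ MidL.image (fun y => y - (m-d)) ∪
            Bm2.image (fun y => y - (m-d))) (Hi.image (fun y => y - (m-d))) :=
          Finset.disjoint_left.2 fun x h1 h2 => by
            obtain ⟨w, hw, hwx⟩ := Finset.mem_image.1 h2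
            have := hHib w hw
            rcases Finset.mem_union.1 h1 with h | h
            · rcases Finset.mem_union.1 h with h | h
              · have := hLoAb x h; omega
              · obtain ⟨v, hv, hvx⟩ := Finset.mem_image.1 h
                have := hMidLb v hv; omega
            · obtain ⟨v, hv, hvx⟩ := Finset.mem_image.1 h
              have := hBm2b v hv; omega
        have ek1 : Disjoint (LoA ∪ MidL.image (fun y => y - (m-d)) ∪
            Bm2.image (fun y => y - (m-d)) ∪ Hi.image (fun y => y - (m-d)))
            (topPart (Finset.Icc (k₀+1) (k₀+d) \ L) Bm.card) :=
          Finset.disjoint_left.2 fun x h1 h2 => by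
            have hf := hF1b x h2
            rcases Finset.mem_union.1 h1 with h | h
            · rcases Finset.mem_union.1 h with h | h
              · rcases Finset.mem_union.1 h with h | h
                · exact hf.1 (hLoAb x h).1
                · obtain ⟨v, hv, hvx⟩ := Finset.mem_image.1 h
                  have := hMidLb v hv; omega
              · obtain ⟨v, hv, hvx⟩ := Finset.mem_image.1 h
                have := hBm2b v hv; omega
            · obtain ⟨v, hv, hvx⟩ := Finset.mem_image.1 h
              have := hHib v hv; omega
        rw [Finset.card_union_of_disjoint ek1, Finset.card_union_of_disjoint ek2,
          Finset.card_union_of_disjoint ek3, Finset.card_union_of_disjoint ek4,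
          cMidLS, cHiS', hBm2Scard, hF1card]
        omega
      have hnK'B2 : ¬ (LoA ∪ MidL.image (fun y => y - (m-d)) ∪
          Bm2.image (fun y => y - (m-d)) ∪ Hi.image (fun y => y - (m-d)) ∪
          topPart (Finset.Icc (k₀+1) (k₀+d) \ L) Bm.card ⊆
          Finset.Icc (k₀+d+k₁+1) (k₀+d+k₁+m')) := by
        rw [Finset.not_subset]
        have haa := hLb a haL
        by_cases c1 : a ≤ k₀+d
        · refine ⟨a, ?_, by rw [Finset.mem_Icc]; omega⟩
          refine Finset.mem_union_left _ (Finset.mem_union_left _ (Finset.mem_union_left _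
            (Finset.mem_union_left _ ?_)))
          rw [hLoA, Finset.mem_inter, Finset.mem_Icc]
          exact ⟨haL, by omega, by omega⟩
        by_cases c2 : a ≤ k₀+m
        · have haBm : a ∈ Bm := by
            rw [hBm, Finset.mem_inter, Finset.mem_sdiff, Finset.mem_Icc, Finset.mem_Icc]
            exact ⟨haL, ⟨by omega, by omega⟩, by omega⟩
          have hpos : 0 < (topPart (Finset.Icc (k₀+1) (k₀+d) \ L) Bm.card).card := by
            rw [hF1card]
            exact Finset.card_pos.2 ⟨a, haBm⟩
          obtain ⟨z, hz⟩ := Finset.card_pos.1 hpos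
          have := hF1b z hz
          exact ⟨z, Finset.mem_union_right _ hz, by rw [Finset.mem_Icc]; omega⟩
        by_cases c3 : a ≤ k₀+m+k₁
        · refine ⟨a - (m-d), ?_, by rw [Finset.mem_Icc]; omega⟩
          refine Finset.mem_union_left _ (Finset.mem_union_left _ (Finset.mem_union_left _
            (Finset.mem_union_right _ ?_)))
          refine Finset.mem_image.2 ⟨a, ?_, rfl⟩
          rw [hMidL, Finset.mem_inter, Finset.mem_Icc]
          exact ⟨haL, by omega, by omega⟩
        · refine ⟨a - (m-d), ?_, by rw [Finset.mem_Icc]; omega⟩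
          refine Finset.mem_union_left _ (Finset.mem_union_right _ ?_)
          refine Finset.mem_image.2 ⟨a, ?_, rfl⟩
          rw [hHi, Finset.mem_inter, Finset.mem_Icc]
          exact ⟨haL, by omega, by omega⟩
      -- final assembly
      constructor
      · rintro (⟨hB, -⟩ | ⟨-, -, -, (⟨hB, -⟩ | ⟨-, hR⟩)⟩)
        · exact absurd hB hP
        · exact absurd hB hnKB1
        · exact Or.inr ⟨hQ, hK'sub, hK'card, Or.inr ⟨hnK'B2, hR⟩⟩
      · rintro (⟨hB, -⟩ | ⟨-, -, -, (⟨hB, -⟩ | ⟨-, hR⟩)⟩)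
        · exact absurd hB hQ
        · exact absurd hB hnK'B2
        · exact Or.inr ⟨hP, hKsub, hKcard, Or.inr ⟨hnKB1, hR⟩⟩
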